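/- arXiv:2103.00625 — 2 statements merged into one kernel-verified Lean document; each statement's English description precedes it below -/
import Mathlib

section
/- Let σ₁ > 0 and let N be a standard Gaussian random variable. There exist constants c > 0 and δ > 0, depending only on σ₁, such that for every σ₂ ≥ 0 with |σ₂ - σ₁| ≤ δ, the d₂-distance between σ₁N and σ₂N satisfies d₂(σ₁ N, σ₂ N) ≥ c |σ₁² - σ₂²|. -/
section AuxLemmas
open MeasureTheory ProbabilityTheory Real Complex NNReal ENNReal

lemma integral_cos_exp_neg_mul_sq {b : ℝ} (hb : 0 < b) :
    ∫ x : ℝ, Real.cos x * Real.exp (-b * x ^ 2) =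
      Real.sqrt (π / b) * Real.exp (-1 / (4 * b)) := by
  have hb' : (0:ℝ) < (b:ℂ).re := by simpa using hb
  have h := fourierIntegral_gaussian (b := (b:ℂ)) hb' 1
  have hre : ∀ x : ℝ, (Complex.exp (I * 1 * x) * Complex.exp (-(b:ℂ) * x ^ 2)).re =
      Real.cos x * Real.exp (-b * x ^ 2) := by
    intro x
    have h1 : Complex.exp (-(b:ℂ) * x ^ 2) = ((Real.exp (-b * x ^ 2) : ℝ) : ℂ) := by
      rw [Complex.ofReal_exp]; push_cast; ring_nf
    have h2 : Complex.exp (I * 1 * x) = Complex.exp (x * I) := by ring_nf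
    rw [h2, h1, mul_comm, Complex.re_ofReal_mul, Complex.exp_ofReal_mul_I_re, mul_comm]
  have hint : Integrable (fun x : ℝ => Complex.exp (I * 1 * x) * Complex.exp (-(b:ℂ) * x ^ 2)) := by
    have h0 := integrable_cexp_quadratic hb' I 0
    refine h0.congr (Filter.Eventually.of_forall fun x => ?_)
    show Complex.exp (-(b:ℂ) * x ^ 2 + I * x + 0) = Complex.exp (I * 1 * x) * Complex.exp (-(b:ℂ) * x ^ 2)
    rw [← Complex.exp_add]
    congr 1
    ring
  have hL := integral_re hint
  simp only [RCLike.re_to_complex] at hL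
  simp_rw [hre] at hL
  have hR : ((↑π / (b:ℂ)) ^ (1 / 2 : ℂ) * Complex.exp (-1 ^ 2 / (4 * (b:ℂ)))).re =
      Real.sqrt (π / b) * Real.exp (-1 / (4 * b)) := by
    have hπb : (0:ℝ) ≤ π / b := div_nonneg Real.pi_pos.le hb.le
    have e1 : ((π : ℂ) / (b:ℂ)) ^ (1 / 2 : ℂ) = ((Real.sqrt (π / b) : ℝ) : ℂ) := by
      rw [show ((π : ℂ) / (b:ℂ)) = ((π / b : ℝ) : ℂ) by push_cast; ring,
        show ((1 / 2 : ℂ)) = ((1 / 2 : ℝ) : ℂ) by push_cast; ring,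
        ← Complex.ofReal_cpow hπb, ← Real.sqrt_eq_rpow]
    have e2 : Complex.exp (-1 ^ 2 / (4 * (b:ℂ))) = ((Real.exp (-1 / (4 * b)) : ℝ) : ℂ) := by
      rw [Complex.ofReal_exp]; congr 1; push_cast; ring
    rw [e1, e2, ← Complex.ofReal_mul, Complex.ofReal_re]
  rw [hL, h, hR]

lemma integral_gaussianReal_eq {v : ℝ≥0} (hv : v ≠ 0) (f : ℝ → ℝ) :
    ∫ x, f x ∂(gaussianReal 0 v) = ∫ x, f x * gaussianPDFReal 0 v x := by
  rw [gaussianReal_of_var_ne_zero 0 hv]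
  unfold gaussianPDF
  have : (fun x => ENNReal.ofReal (gaussianPDFReal 0 v x)) =
      fun x => ((gaussianPDFReal 0 v x).toNNReal : ℝ≥0∞) := rfl
  rw [this, integral_withDensity_eq_integral_smul
    (measurable_gaussianPDFReal 0 v).real_toNNReal]
  congr 1
  ext x
  rw [NNReal.smul_def, smul_eq_mul, Real.coe_toNNReal _ (gaussianPDFReal_nonneg 0 v x), mul_comm]

lemma integrable_gaussianReal_of_mul {v : ℝ≥0} (hv : v ≠ 0) {f : ℝ → ℝ}
    (h : Integrable (fun x => f x * gaussianPDFReal 0 v x)) :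
    Integrable f (gaussianReal 0 v) := by
  rw [gaussianReal_of_var_ne_zero 0 hv]
  unfold gaussianPDF
  rw [integrable_withDensity_iff (measurable_gaussianPDFReal 0 v).ennreal_ofReal
    (Filter.Eventually.of_forall fun x => ENNReal.ofReal_lt_top)]
  refine h.congr (Filter.Eventually.of_forall fun x => ?_)
  show f x * gaussianPDFReal 0 v x = f x * (ENNReal.ofReal (gaussianPDFReal 0 v x)).toReal
  rw [ENNReal.toReal_ofReal (gaussianPDFReal_nonneg 0 v x)]

lemma integrable_abs_gaussianReal (v : ℝ≥0) :
    Integrable (fun x : ℝ => |x|) (gaussianReal 0 v) := by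
  rcases eq_or_ne v 0 with hv | hv
  · rw [hv, gaussianReal_zero_var]
    exact (integrable_const (|(0:ℝ)|)).congr (ae_eq_dirac fun x : ℝ => |x|).symm
  · refine integrable_gaussianReal_of_mul hv ?_
    have hb : (0:ℝ) < (2 * (v:ℝ))⁻¹ :=
      inv_pos.2 (by positivity)
    have h1 := (integrable_rpow_mul_exp_neg_mul_sq hb (s := 1) (by norm_num)).abs
    refine (h1.const_mul (Real.sqrt (2 * π * v))⁻¹).congr
      (Filter.Eventually.of_forall fun x => ?_)
    rw [gaussianPDFReal_def]
    simp only [Real.rpow_one, abs_mul, Real.abs_exp, sub_zero]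
    rw [show -(2 * (v:ℝ))⁻¹ * x ^ 2 = -x ^ 2 / (2 * v) by ring]
    ring

lemma integral_cos_gaussianReal (v : ℝ≥0) :
    ∫ x, Real.cos x ∂(gaussianReal 0 v) = Real.exp (-(v:ℝ) / 2) := by
  rcases eq_or_ne v 0 with hv | hv
  · rw [hv, gaussianReal_zero_var, integral_dirac]
    simp
  · rw [integral_gaussianReal_eq hv]
    have hvpos : (0:ℝ) < v := by
      have := hv
      positivity
    have hb : (0:ℝ) < (2 * (v:ℝ))⁻¹ := by positivity
    have key := integral_cos_exp_neg_mul_sq hb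
    have hrw : ∀ x : ℝ, Real.cos x * gaussianPDFReal 0 v x =
        (Real.sqrt (2 * π * v))⁻¹ * (Real.cos x * Real.exp (-(2 * (v:ℝ))⁻¹ * x ^ 2)) := by
      intro x
      rw [gaussianPDFReal_def]
      rw [show -(2 * (v:ℝ))⁻¹ * x ^ 2 = -(x - 0) ^ 2 / (2 * v) by ring]
      ring
    simp_rw [hrw]
    rw [integral_const_mul, key]
    have h1 : π / (2 * (v:ℝ))⁻¹ = 2 * π * v := by field_simp
    have h2 : -1 / (4 * (2 * (v:ℝ))⁻¹) = -(v:ℝ) / 2 := by field_simp; ring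
    rw [h1, h2, ← mul_assoc, inv_mul_cancel₀ (by positivity), one_mul]
lemma exp_gap_lower {a b M : ℝ} (hab : a ≤ b) (hbM : b ≤ M) :
    Real.exp (-M / 2) / 2 * (b - a) ≤ Real.exp (-a / 2) - Real.exp (-b / 2) := by
  have h1 : Real.exp (-a / 2) = Real.exp (-b / 2) * Real.exp ((b - a) / 2) := by
    rw [← Real.exp_add]; ring_nf
  have h2 : (b - a) / 2 + 1 ≤ Real.exp ((b - a) / 2) := Real.add_one_le_exp _
  have h3 : Real.exp (-M / 2) ≤ Real.exp (-b / 2) := Real.exp_le_exp.2 (by linarith)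
  have h4 : (0:ℝ) < Real.exp (-M / 2) := Real.exp_pos _
  have h5 : (0:ℝ) < Real.exp (-b / 2) := Real.exp_pos _
  rw [h1]
  nlinarith [mul_le_mul_of_nonneg_left h2 h5.le]

lemma d2_set_bddAbove (μ ν : Measure ℝ) [IsProbabilityMeasure μ] [IsProbabilityMeasure ν]
    (hμ : Integrable (fun x : ℝ => |x|) μ) (hν : Integrable (fun x : ℝ => |x|) ν) :
    BddAbove {r : ℝ | ∃ h : ℝ → ℝ, ContDiff ℝ 2 h ∧ LipschitzWith 1 h ∧
      (∀ x : ℝ, |deriv (deriv h) x| ≤ 1) ∧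
      r = |(∫ x, h x ∂μ) - ∫ x, h x ∂ν|} := by
  refine ⟨(∫ x, |x| ∂μ) + ∫ x, |x| ∂ν, ?_⟩
  rintro r ⟨h, hc2, hlip, -, rfl⟩
  have hcont : Continuous h := hlip.continuous
  have hbound : ∀ x : ℝ, ‖h x - h 0‖ ≤ |x| := by
    intro x
    have := hlip.dist_le_mul x 0
    simpa [Real.dist_eq, Real.norm_eq_abs] using this
  have hgint : ∀ (m : Measure ℝ), IsProbabilityMeasure m → Integrable (fun x : ℝ => |x|) m →
      Integrable (fun x => h x - h 0) m := by
    intro m _ hm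
    exact hm.mono' ((hcont.sub continuous_const).aestronglyMeasurable)
      (Filter.Eventually.of_forall hbound)
  have hμg := hgint μ inferInstance hμ
  have hνg := hgint ν inferInstance hν
  have hμh : Integrable h μ :=
    (hμg.add (integrable_const (h 0))).congr (Filter.Eventually.of_forall fun x => by simp)
  have hνh : Integrable h ν :=
    (hνg.add (integrable_const (h 0))).congr (Filter.Eventually.of_forall fun x => by simp)
  have key : (∫ x, h x ∂μ) - ∫ x, h x ∂ν = (∫ x, h x - h 0 ∂μ) - ∫ x, h x - h 0 ∂ν := by
    rw [integral_sub hμh (integrable_const _), integral_sub hνh (integrable_const _)]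
    simp
  rw [key]
  have b1 : |∫ x, h x - h 0 ∂μ| ≤ ∫ x, |x| ∂μ := by
    simpa [Real.norm_eq_abs] using
      norm_integral_le_of_norm_le hμ (Filter.Eventually.of_forall hbound)
  have b2 : |∫ x, h x - h 0 ∂ν| ≤ ∫ x, |x| ∂ν := by
    simpa [Real.norm_eq_abs] using
      norm_integral_le_of_norm_le hν (Filter.Eventually.of_forall hbound)
  calc |(∫ x, h x - h 0 ∂μ) - ∫ x, h x - h 0 ∂ν|
      ≤ |∫ x, h x - h 0 ∂μ| + |∫ x, h x - h 0 ∂ν| := abs_sub _ _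
    _ ≤ (∫ x, |x| ∂μ) + ∫ x, |x| ∂ν := add_le_add b1 b2

end AuxLemmas

open MeasureTheory ProbabilityTheory

open scoped NNReal

/-- The univariate `d₂`-distance between two probability measures on `ℝ`: the
supremum of `|∫ h dμ - ∫ h dν|` over all `C²` functions `h` with Lipschitz
constant at most one and second derivative bounded in absolute value by one. -/
noncomputable def d2distReal (μ ν : Measure ℝ) : ℝ :=
  sSup {r : ℝ | ∃ h : ℝ → ℝ, ContDiff ℝ 2 h ∧ LipschitzWith 1 h ∧
    (∀ x : ℝ, |deriv (deriv h) x| ≤ 1) ∧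
    r = |(∫ x, h x ∂μ) - ∫ x, h x ∂ν|}

theorem stmt_10 (σ₁ : ℝ) (hσ₁ : 0 < σ₁) :
    ∃ c > 0, ∃ δ > 0, ∀ σ₂ : ℝ, 0 ≤ σ₂ → |σ₂ - σ₁| ≤ δ →
      c * |σ₁ ^ 2 - σ₂ ^ 2| ≤
        d2distReal (gaussianReal 0 (σ₁ ^ 2).toNNReal) (gaussianReal 0 (σ₂ ^ 2).toNNReal) := by
  refine ⟨Real.exp (-(4 * σ₁ ^ 2) / 2) / 2, by positivity, σ₁, hσ₁, fun σ₂ hσ₂ hδ => ?_⟩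
  set v₁ : ℝ≥0 := (σ₁ ^ 2).toNNReal with hv₁
  set v₂ : ℝ≥0 := (σ₂ ^ 2).toNNReal with hv₂
  have hv₁r : ((v₁ : ℝ)) = σ₁ ^ 2 := Real.coe_toNNReal _ (sq_nonneg _)
  have hv₂r : ((v₂ : ℝ)) = σ₂ ^ 2 := Real.coe_toNNReal _ (sq_nonneg _)
  set μ := gaussianReal 0 v₁
  set ν := gaussianReal 0 v₂
  -- the test function
  set h : ℝ → ℝ := fun x => -Real.cos x with hh
  have hcd : ContDiff ℝ 2 h := (Real.contDiff_cos).neg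
  have hderiv : deriv h = Real.sin := by
    funext x
    rw [hh]
    rw [deriv.fun_neg, Real.deriv_cos, neg_neg]
  have hlip : LipschitzWith 1 h := by
    refine lipschitzWith_of_nnnorm_deriv_le (Real.differentiable_cos.neg) fun x => ?_
    rw [hderiv]
    rw [← NNReal.coe_le_coe]
    simpa [Real.norm_eq_abs] using Real.abs_sin_le_one x
  have hderiv2 : ∀ x : ℝ, |deriv (deriv h) x| ≤ 1 := by
    intro x
    rw [hderiv, Real.deriv_sin]
    exact Real.abs_cos_le_one x
  have hint : ∀ v : ℝ≥0, ∫ x, h x ∂(gaussianReal 0 v) = -Real.exp (-(v:ℝ) / 2) := by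
    intro v
    rw [hh]
    rw [integral_neg, integral_cos_gaussianReal]
  have hmem : |Real.exp (-(v₂:ℝ) / 2) - Real.exp (-(v₁:ℝ) / 2)| ∈
      {r : ℝ | ∃ h : ℝ → ℝ, ContDiff ℝ 2 h ∧ LipschitzWith 1 h ∧
        (∀ x : ℝ, |deriv (deriv h) x| ≤ 1) ∧
        r = |(∫ x, h x ∂μ) - ∫ x, h x ∂ν|} := by
    refine ⟨h, hcd, hlip, hderiv2, ?_⟩
    rw [hint v₁, hint v₂]
    rw [show -Real.exp (-(v₁:ℝ) / 2) - -Real.exp (-(v₂:ℝ) / 2) =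
      Real.exp (-(v₂:ℝ) / 2) - Real.exp (-(v₁:ℝ) / 2) by ring]
  have hbdd : BddAbove {r : ℝ | ∃ h : ℝ → ℝ, ContDiff ℝ 2 h ∧ LipschitzWith 1 h ∧
      (∀ x : ℝ, |deriv (deriv h) x| ≤ 1) ∧
      r = |(∫ x, h x ∂μ) - ∫ x, h x ∂ν|} :=
    d2_set_bddAbove μ ν (integrable_abs_gaussianReal v₁) (integrable_abs_gaussianReal v₂)
  have hsup := le_csSup hbdd hmem
  refine le_trans ?_ hsup
  -- numeric inequality
  have hσ₂le : σ₂ ≤ 2 * σ₁ := by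
    have := abs_le.1 hδ
    linarith [this.2]
  have hb1 : σ₁ ^ 2 ≤ 4 * σ₁ ^ 2 := by nlinarith
  have hb2 : σ₂ ^ 2 ≤ 4 * σ₁ ^ 2 := by nlinarith
  rw [hv₁r, hv₂r]
  rcases le_total (σ₁ ^ 2) (σ₂ ^ 2) with hab | hab
  · have hkey := exp_gap_lower hab hb2
    have hmono : Real.exp (-σ₂ ^ 2 / 2) ≤ Real.exp (-σ₁ ^ 2 / 2) :=
      Real.exp_le_exp.2 (by linarith)
    rw [_root_.abs_of_nonpos (by linarith), _root_.abs_of_nonpos (by linarith)]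
    linarith
  · have hkey := exp_gap_lower hab hb1
    have hmono : Real.exp (-σ₁ ^ 2 / 2) ≤ Real.exp (-σ₂ ^ 2 / 2) :=
      Real.exp_le_exp.2 (by linarith)
    rw [_root_.abs_of_nonneg (by linarith), _root_.abs_of_nonneg (by linarith)]
    linarith
end

section
/- Let d ≥ 1 and ϱ > 0. There exist constants c > 0 and s₀ ≥ 1, depending only on d and ϱ, such that for all s ≥ s₀, s · ∫_{[0,1]^d} ∫_{ℝ^d \ [0,1]^d} 1{‖x - y‖ ≤ ϱ s^(-1/d)} dy dx ≥ c · s^(-1/d). -/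
open MeasureTheory

private lemma eucl_pi_meas (d : ℕ) (t : Fin d → Set ℝ) (ht : ∀ i, MeasurableSet (t i)) :
    MeasurableSet {x : EuclideanSpace ℝ (Fin d) | ∀ i, x i ∈ t i} := by
  have h : {x : EuclideanSpace ℝ (Fin d) | ∀ i, x i ∈ t i}
      = ⋂ i, (fun x : EuclideanSpace ℝ (Fin d) => x i) ⁻¹' t i := by ext; simp
  rw [h]
  exact MeasurableSet.iInter fun i => (EuclideanSpace.proj (𝕜 := ℝ) i).continuous.measurable (ht i)

private lemma eucl_pi_vol (d : ℕ) (t : Fin d → Set ℝ) (ht : ∀ i, MeasurableSet (t i)) :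
    volume {x : EuclideanSpace ℝ (Fin d) | ∀ i, x i ∈ t i} = ∏ i, volume (t i) := by
  have h : {x : EuclideanSpace ℝ (Fin d) | ∀ i, x i ∈ t i}
      = (MeasurableEquiv.toLp 2 (Fin d → ℝ)).symm ⁻¹' Set.univ.pi t := by
    ext z; simp [Set.mem_pi]
  rw [h, (EuclideanSpace.volume_preserving_symm_measurableEquiv_toLp (Fin d)).measure_preimage
    ((MeasurableSet.univ_pi ht).nullMeasurableSet), volume_pi_pi]

set_option maxHeartbeats 1000000 in
theorem stmt_13 (d : ℕ) (hd : 1 ≤ d) (ϱ : ℝ) (hϱ : 0 < ϱ) :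
    ∃ c > 0, ∃ s₀ : ℝ, 1 ≤ s₀ ∧ ∀ s : ℝ, s₀ ≤ s →
      c * s ^ (-(1 / (d : ℝ))) ≤
        s * ∫ x in {x : EuclideanSpace ℝ (Fin d) | ∀ i, x i ∈ Set.Icc (0 : ℝ) 1},
          ∫ y in {y : EuclideanSpace ℝ (Fin d) | ∀ i, y i ∈ Set.Icc (0 : ℝ) 1}ᶜ,
            (if ‖x - y‖ ≤ ϱ * s ^ (-(1 / (d : ℝ))) then (1 : ℝ) else 0) := by
  have hd0 : (0 : ℝ) < d := by exact_mod_cast Nat.lt_of_lt_of_le Nat.zero_lt_one hd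
  have hdne : (d : ℝ) ≠ 0 := ne_of_gt hd0
  have hsq : (0 : ℝ) < Real.sqrt d := Real.sqrt_pos.2 hd0
  set K : ℝ := ϱ / (2 * Real.sqrt d) with hK
  have hK0 : 0 < K := div_pos hϱ (by positivity)
  refine ⟨K ^ (d + 1), by positivity, max 1 (K ^ d), le_max_left _ _, fun s hs => ?_⟩
  have hs1 : (1 : ℝ) ≤ s := le_trans (le_max_left _ _) hs
  have hs0 : (0 : ℝ) < s := lt_of_lt_of_le one_pos hs1
  set t : ℝ := s ^ (-(1 / (d : ℝ))) with ht
  have ht0 : 0 < t := Real.rpow_pos_of_pos hs0 _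
  set r : ℝ := ϱ * t with hr
  have hr0 : 0 < r := mul_pos hϱ ht0
  set δ : ℝ := K * t with hδ
  have hδ0 : 0 < δ := mul_pos hK0 ht0
  -- δ ≤ 1
  have hδ1 : δ ≤ 1 := by
    have hKd : K ^ d ≤ s := le_trans (le_max_right _ _) hs
    have h1 : K ≤ s ^ ((1 : ℝ) / d) := by
      have := Real.rpow_le_rpow (by positivity) hKd (by positivity : (0:ℝ) ≤ 1 / d)
      rwa [← Real.rpow_natCast K d, ← Real.rpow_mul hK0.le,
        mul_one_div, div_self hdne, Real.rpow_one] at this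
    have h2 : t = (s ^ ((1 : ℝ) / d))⁻¹ := by
      rw [ht, ← Real.rpow_neg_one (s ^ ((1:ℝ)/d)), ← Real.rpow_mul hs0.le]; ring_nf
    rw [hδ, h2]
    calc K * (s ^ ((1:ℝ)/d))⁻¹ ≤ (s ^ ((1:ℝ)/d)) * (s ^ ((1:ℝ)/d))⁻¹ := by
          gcongr
      _ = 1 := by field_simp
  -- relation r = 2 √d δ
  have hrδ : r = 2 * Real.sqrt d * δ := by
    rw [hr, hδ, hK]; field_simp
  set i0 : Fin d := ⟨0, hd⟩ with hi0
  set C : Set (EuclideanSpace ℝ (Fin d)) := {x : (EuclideanSpace ℝ (Fin d)) | ∀ i, x i ∈ Set.Icc (0 : ℝ) 1} with hC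
  have hCmeas : MeasurableSet C := eucl_pi_meas d _ (fun _ => measurableSet_Icc)
  have hCvol : volume C = 1 := by
    rw [hC, eucl_pi_vol d _ (fun _ => measurableSet_Icc)]
    simp [Real.volume_Icc]
  set F : (EuclideanSpace ℝ (Fin d)) → ℝ := fun x => (volume (Cᶜ ∩ Metric.closedBall x r)).toReal with hF
  -- inner integral equals F x
  have hinner : ∀ x : (EuclideanSpace ℝ (Fin d)),
      (∫ y in Cᶜ, (if ‖x - y‖ ≤ r then (1:ℝ) else 0)) = F x := by
    intro x
    have h1 : (fun y : (EuclideanSpace ℝ (Fin d)) => if ‖x - y‖ ≤ r then (1:ℝ) else 0)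
        = (Metric.closedBall x r).indicator (fun _ => (1:ℝ)) := by
      funext y
      by_cases h : ‖x - y‖ ≤ r
      · rw [if_pos h, Set.indicator_of_mem]
        rw [Metric.mem_closedBall, dist_eq_norm, norm_sub_rev]
        exact h
      · rw [if_neg h, Set.indicator_of_notMem]
        rw [Metric.mem_closedBall, dist_eq_norm, norm_sub_rev]
        exact h
    rw [h1, setIntegral_indicator measurableSet_closedBall, setIntegral_const,
      smul_eq_mul, mul_one]
    rfl
  -- measurability of F
  have hFmeas : Measurable F := by
    have hset : MeasurableSet {p : (EuclideanSpace ℝ (Fin d)) × (EuclideanSpace ℝ (Fin d)) |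
        p.2 ∈ Cᶜ ∩ Metric.closedBall p.1 r} := by
      have h1 : {p : (EuclideanSpace ℝ (Fin d)) × (EuclideanSpace ℝ (Fin d)) | p.2 ∈ Cᶜ ∩ Metric.closedBall p.1 r}
          = (Prod.snd ⁻¹' Cᶜ) ∩ {p : (EuclideanSpace ℝ (Fin d)) × (EuclideanSpace ℝ (Fin d)) | dist p.2 p.1 ≤ r} := by
        ext p; simp [Metric.mem_closedBall]
      rw [h1]
      refine MeasurableSet.inter (hCmeas.compl.preimage measurable_snd) ?_
      exact measurableSet_le (measurable_dist.comp (measurable_snd.prodMk measurable_fst))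
        measurable_const
    exact (measurable_measure_prodMk_left hset).ennreal_toReal
  -- uniform bound and integrability
  have hball : ∀ x : (EuclideanSpace ℝ (Fin d)), volume (Cᶜ ∩ Metric.closedBall x r) ≤ volume (Metric.closedBall (0:(EuclideanSpace ℝ (Fin d))) r) := by
    intro x
    calc volume (Cᶜ ∩ Metric.closedBall x r) ≤ volume (Metric.closedBall x r) :=
          measure_mono Set.inter_subset_right
      _ = volume (Metric.closedBall (0:(EuclideanSpace ℝ (Fin d))) r) := Measure.addHaar_closedBall_center _ _ _
  have hballfin : volume (Metric.closedBall (0:(EuclideanSpace ℝ (Fin d))) r) < ⊤ := measure_closedBall_lt_top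
  have hFint : IntegrableOn F C := by
    refine Integrable.mono' (g := fun _ => (volume (Metric.closedBall (0:(EuclideanSpace ℝ (Fin d))) r)).toReal)
      (integrableOn_const (by rw [hCvol]; exact ENNReal.one_ne_top))
      hFmeas.aestronglyMeasurable ?_
    filter_upwards with x
    rw [Real.norm_of_nonneg ENNReal.toReal_nonneg]
    exact ENNReal.toReal_mono hballfin.ne (hball x)
  -- the slab A
  set A : Set (EuclideanSpace ℝ (Fin d)) := {x : (EuclideanSpace ℝ (Fin d)) | ∀ i, x i ∈ (if i = i0 then Set.Icc (1 - δ) 1 else Set.Icc (0:ℝ) 1)}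
    with hA
  have hAmeas : MeasurableSet A :=
    eucl_pi_meas d _ (fun i => by split <;> exact measurableSet_Icc)
  have hAvol : volume A = ENNReal.ofReal δ := by
    rw [hA, eucl_pi_vol d _ (fun i => by split <;> exact measurableSet_Icc)]
    rw [Finset.prod_eq_single i0 (fun i _ hi => by simp [hi, Real.volume_Icc]) (by simp)]
    simp [Real.volume_Icc]
  have hAC : A ⊆ C := by
    intro x hx i
    have := hx i
    by_cases h : i = i0
    · rw [if_pos h] at this
      exact ⟨le_trans (by linarith) this.1, this.2⟩
    · rwa [if_neg h] at this
  -- pointwise lower bound on A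
  have hpoint : ∀ x ∈ A, δ ^ d ≤ F x := by
    intro x hx
    set B : Set (EuclideanSpace ℝ (Fin d)) := {y : (EuclideanSpace ℝ (Fin d)) | ∀ i, y i ∈ (if i = i0 then Set.Ioc 1 (1 + δ)
      else Set.Icc (x i) (x i + δ))} with hB
    have hBvol : volume B = ENNReal.ofReal δ ^ d := by
      rw [hB, eucl_pi_vol d (fun i => if i = i0 then Set.Ioc 1 (1 + δ)
        else Set.Icc (x i) (x i + δ)) (fun i => by
          dsimp only
          split
          · exact measurableSet_Ioc
          · exact measurableSet_Icc)]
      have : ∀ i : Fin d, volume (if i = i0 then Set.Ioc 1 (1 + δ)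
          else Set.Icc (x i) (x i + δ)) = ENNReal.ofReal δ := by
        intro i; split <;> simp [Real.volume_Ioc, Real.volume_Icc]
      rw [Finset.prod_congr rfl (fun i _ => this i), Finset.prod_const]
      simp
    have hBsub : B ⊆ Cᶜ ∩ Metric.closedBall x r := by
      intro y hy
      constructor
      · intro hyC
        have h1 := hy i0
        rw [if_pos rfl] at h1
        have h2 := hyC i0
        exact absurd h2.2 (not_le.2 h1.1)
      · rw [Metric.mem_closedBall, EuclideanSpace.dist_eq]
        have hcoord : ∀ i : Fin d, dist (y i) (x i) ^ 2 ≤ (2 * δ) ^ 2 := by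
          intro i
          have hyi := hy i
          have hb : |y i - x i| ≤ 2 * δ := by
            by_cases h : i = i0
            · rw [if_pos h] at hyi
              have hxi := hx i
              rw [if_pos h] at hxi
              rw [abs_le]
              constructor <;> [nlinarith [hyi.1, hxi.2]; nlinarith [hyi.2, hxi.1]]
            · rw [if_neg h] at hyi
              rw [abs_le]
              constructor <;> nlinarith [hyi.1, hyi.2]
          rw [Real.dist_eq]
          exact pow_le_pow_left₀ (abs_nonneg _) hb 2
        have hsum : ∑ i, dist (y i) (x i) ^ 2 ≤ (d : ℝ) * (2 * δ) ^ 2 := by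
          calc ∑ i, dist (y i) (x i) ^ 2 ≤ ∑ _i : Fin d, (2 * δ) ^ 2 :=
                Finset.sum_le_sum (fun i _ => hcoord i)
            _ = (d : ℝ) * (2 * δ) ^ 2 := by
                simp [Finset.sum_const]
                try ring
        have hr2 : (d : ℝ) * (2 * δ) ^ 2 = r ^ 2 := by
          rw [hrδ]
          have : Real.sqrt d ^ 2 = (d : ℝ) := Real.sq_sqrt hd0.le
          nlinarith [this]
        calc Real.sqrt (∑ i, dist (y i) (x i) ^ 2) ≤ Real.sqrt (r ^ 2) := by
              apply Real.sqrt_le_sqrt; rw [← hr2]; exact hsum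
          _ = r := by rw [Real.sqrt_sq hr0.le]
    have h1 : volume B ≤ volume (Cᶜ ∩ Metric.closedBall x r) := measure_mono hBsub
    have h2 : (volume B).toReal ≤ F x :=
      ENNReal.toReal_mono (ne_of_lt (lt_of_le_of_lt (hball x) hballfin)) h1
    calc δ ^ d = (volume B).toReal := by
          rw [hBvol, ← ENNReal.ofReal_pow hδ0.le, ENNReal.toReal_ofReal (by positivity)]
      _ ≤ F x := h2
  -- assemble
  have houter : δ ^ d * δ ≤ ∫ x in C, F x := by
    have h1 : δ ^ d * (volume A).toReal ≤ ∫ x in A, F x :=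
      setIntegral_ge_of_const_le_real hAmeas (by rw [hAvol]; exact ENNReal.ofReal_ne_top)
        hpoint (hFint.mono_set hAC)
    have h2 : ∫ x in A, F x ≤ ∫ x in C, F x :=
      setIntegral_mono_set hFint
        (Filter.Eventually.of_forall (fun x => ENNReal.toReal_nonneg))
        (HasSubset.Subset.eventuallyLE hAC)
    calc δ ^ d * δ = δ ^ d * (volume A).toReal := by
          rw [hAvol, ENNReal.toReal_ofReal hδ0.le]
      _ ≤ ∫ x in A, F x := h1
      _ ≤ ∫ x in C, F x := h2
  have hrw : (∫ x in C, ∫ y in Cᶜ, (if ‖x - y‖ ≤ r then (1:ℝ) else 0)) = ∫ x in C, F x := by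
    exact setIntegral_congr_fun hCmeas (fun x _ => hinner x)
  rw [hrw]
  -- final arithmetic
  have hfinal : K ^ (d + 1) * t = s * (δ ^ d * δ) := by
    have h1 : δ ^ d * δ = K ^ (d + 1) * t ^ (d + 1) := by
      rw [hδ, mul_pow, pow_succ, pow_succ]; ring
    have h2 : t ^ (d + 1) = s ^ ((-(1 / (d : ℝ))) * ((d : ℝ) + 1)) := by
      rw [ht, ← Real.rpow_natCast (s ^ (-(1 / (d : ℝ)))) (d + 1),
        ← Real.rpow_mul hs0.le]
      push_cast
      ring_nf
    have h3 : s * s ^ ((-(1 / (d : ℝ))) * ((d : ℝ) + 1))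
        = s ^ (1 + (-(1 / (d : ℝ))) * ((d : ℝ) + 1)) := by
      rw [Real.rpow_add hs0, Real.rpow_one]
    have h4 : (1 + (-(1 / (d : ℝ))) * ((d : ℝ) + 1)) = -(1 / (d : ℝ)) := by
      field_simp
      ring
    rw [h1, show s * (K ^ (d + 1) * t ^ (d + 1)) = K ^ (d + 1) * (s * t ^ (d + 1)) by ring,
      h2, h3, h4, ht]
  calc K ^ (d + 1) * t = s * (δ ^ d * δ) := hfinal
    _ ≤ s * ∫ x in C, F x := by
        apply mul_le_mul_of_nonneg_left houter hs0.le
end
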